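/- Suppose each scale function α_n is a constant function on I. Then for every b ∈ L^p(I) (1 ≤ p ≤ ∞), ‖0 *_T b‖_p ≤ Λ ‖(0 *_T b) − b‖_p. If moreover each α_n is constantly equal to Λ or to −Λ (i.e., α_n(t) = ±Λ for all n and all t ∈ I), then equality holds: ‖0 *_T b‖_p = Λ ‖(0 *_T b) − b‖_p. -/

import Mathlib

open MeasureTheory ENNReal

noncomputable section

/-- The inverse of the increasing affine map `L n` sending `[x 0, x N]` onto
`[x n, x (n+1)]` (so `L n (x 0) = x n.castSucc` and `L n (x N) = x n.succ`). -/
def Linv {N : ℕ} (x : Fin (N + 1) → ℝ) (n : Fin N) (y : ℝ) : ℝ :=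
  x 0 + (y - x n.castSucc) * (x (Fin.last N) - x 0) / (x n.succ - x n.castSucc)

/-- The subinterval `I n` of the partition: `[x 0, x 1]` for `n = 0` and
`(x n, x (n+1)]` otherwise. -/
def subInt {N : ℕ} (x : Fin (N + 1) → ℝ) (n : Fin N) : Set ℝ :=
  if n.val = 0 then Set.Icc (x n.castSucc) (x n.succ)
  else Set.Ioc (x n.castSucc) (x n.succ)

/-- `h` is the image of `g` under the Read–Bajraktarević operator `T_{f,b}` with
scale functions `α`, almost everywhere: on each `I n`,
`h = f + (α n ∘ Lₙ⁻¹) · ((g - b) ∘ Lₙ⁻¹)`. -/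
def RBEq {N : ℕ} (μ : Measure ℝ) (x : Fin (N + 1) → ℝ) (α : Fin N → ℝ → ℝ)
    (f b g h : ℝ → ℝ) : Prop :=
  ∀ n : Fin N, ∀ᵐ t ∂μ, t ∈ subInt x n →
    h t = f t + α n (Linv x n t) * (g (Linv x n t) - b (Linv x n t))

/-- `h` satisfies the self-referential equation of `T_{f,b}`, i.e. `h` is a fixed
point of `T_{f,b}`; `h` is then the fractal convolution `f *_T b`. -/
def SelfRef {N : ℕ} (μ : Measure ℝ) (x : Fin (N + 1) → ℝ) (α : Fin N → ℝ → ℝ)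
    (f b h : ℝ → ℝ) : Prop :=
  RBEq μ x α f b h h

private lemma aux_embed {s : ℝ} (d : ℝ) (hs : s ≠ 0) :
    MeasurableEmbedding (fun t : ℝ => s * t + d) :=
  ((Homeomorph.mulLeft₀ s hs).trans (Homeomorph.addRight d)).measurableEmbedding

private lemma aux_map {s : ℝ} (d : ℝ) (hs : s ≠ 0) :
    Measure.map (fun t : ℝ => s * t + d) volume = ENNReal.ofReal |s⁻¹| • volume := by
  have h : (fun t : ℝ => s * t + d) = (fun t : ℝ => t + d) ∘ (fun t : ℝ => s * t) := rfl
  rw [h, ← Measure.map_map (measurable_add_const d) (measurable_const_mul s),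
    Real.map_volume_mul_left hs, Measure.map_smul, map_add_right_eq_self]

private lemma core (N : ℕ) (hN : 2 ≤ N) (x : Fin (N + 1) → ℝ) (hx : StrictMono x)
    (μ : Measure ℝ) (hμ : μ = volume.restrict (Set.Icc (x 0) (x (Fin.last N))))
    (p : ℝ≥0∞) (hp : 1 ≤ p) (c : Fin N → ℝ) (Λ : ℝ)
    (aa : Fin N → ℝ → ℝ) (h g : ℝ → ℝ)
    (hh : ∀ n : Fin N, ∀ᵐ t ∂μ, t ∈ subInt x n → h t = aa n (Linv x n t) * g (Linv x n t))
    (haa : ∀ n : Fin N, ∀ᵐ y ∂μ, aa n y = c n) :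
    ((∀ n, |c n| ≤ Λ) → eLpNorm h p μ ≤ ENNReal.ofReal Λ * eLpNorm g p μ) ∧
      ((∀ n, |c n| = Λ) → eLpNorm h p μ = ENNReal.ofReal Λ * eLpNorm g p μ) := by
  have hNpos : 0 < N := by omega
  have h0N : (0 : Fin (N + 1)) < Fin.last N := by
    rw [Fin.lt_def]
    simp only [Fin.val_zero, Fin.val_last]
    omega
  have hAB : x 0 < x (Fin.last N) := hx h0N
  have hlt : ∀ n : Fin N, x n.castSucc < x n.succ := fun n => hx Fin.castSucc_lt_succ
  set s : Fin N → ℝ := fun n => (x (Fin.last N) - x 0) / (x n.succ - x n.castSucc) with hs_def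
  set d : Fin N → ℝ := fun n => x 0 - s n * x n.castSucc with hd_def
  have hs : ∀ n, 0 < s n := fun n => div_pos (sub_pos.2 hAB) (sub_pos.2 (hlt n))
  have hLfun : ∀ n, Linv x n = fun t => s n * t + d n := by
    intro n
    funext t
    simp only [Linv, hs_def, hd_def]
    field_simp
    ring
  have hL_lo : ∀ n, Linv x n (x n.castSucc) = x 0 := by
    intro n; rw [hLfun n]; simp only [hd_def]; ring
  have hL_hi : ∀ n, Linv x n (x n.succ) = x (Fin.last N) := by
    intro n
    rw [hLfun n]
    simp only [hd_def, hs_def]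
    have hne : x n.succ - x n.castSucc ≠ 0 := sub_ne_zero.2 (hlt n).ne'
    field_simp
    ring
  have hLle : ∀ n, ∀ u v : ℝ, Linv x n u ≤ Linv x n v ↔ u ≤ v := by
    intro n u v
    rw [hLfun n]
    simp only [add_le_add_iff_right]
    exact mul_le_mul_iff_right₀ (hs n)
  have hLlt : ∀ n, ∀ u v : ℝ, Linv x n u < Linv x n v ↔ u < v := by
    intro n u v
    rw [hLfun n]
    simp only [add_lt_add_iff_right]
    exact mul_lt_mul_iff_right₀ (hs n)
  set T : Fin N → Set ℝ := fun n =>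
    if n.val = 0 then Set.Icc (x 0) (x (Fin.last N)) else Set.Ioc (x 0) (x (Fin.last N)) with hT_def
  have hpre : ∀ n, (Linv x n) ⁻¹' (T n) = subInt x n := by
    intro n
    ext t
    by_cases h0 : n.val = 0 <;>
      simp only [hT_def, subInt, h0, if_true, if_false, reduceIte, Set.mem_preimage,
        Set.mem_Icc, Set.mem_Ioc] <;>
      rw [← hL_lo n, ← hL_hi n]
    · rw [hLle, hLle]
    · rw [hLlt, hLle]
  have hme : ∀ n, MeasurableEmbedding (Linv x n) := by
    intro n
    rw [hLfun n]
    exact aux_embed (d n) (hs n).ne'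
  have hmap : ∀ n, Measure.map (Linv x n) (volume.restrict (subInt x n))
      = ENNReal.ofReal (s n)⁻¹ • μ := by
    intro n
    have h1 : volume.restrict (T n) = μ := by
      by_cases h0 : n.val = 0
      · simp only [hT_def, h0, if_true, reduceIte, hμ]
      · simp only [hT_def, h0, if_false, reduceIte, hμ]
        exact Measure.restrict_congr_set Ioc_ae_eq_Icc
    have h2 : Measure.map (Linv x n) volume = ENNReal.ofReal (s n)⁻¹ • volume := by
      rw [hLfun n, aux_map (d n) (hs n).ne', abs_of_nonneg (inv_nonneg.2 (hs n).le)]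
    calc Measure.map (Linv x n) (volume.restrict (subInt x n))
        = Measure.map (Linv x n) (volume.restrict ((Linv x n) ⁻¹' (T n))) := by rw [hpre]
      _ = (Measure.map (Linv x n) volume).restrict (T n) :=
          ((hme n).restrict_map volume (T n)).symm
      _ = (ENNReal.ofReal (s n)⁻¹ • volume).restrict (T n) := by rw [h2]
      _ = ENNReal.ofReal (s n)⁻¹ • μ := by rw [Measure.restrict_smul, h1]
  have hwne : ∀ n, (ENNReal.ofReal (s n)⁻¹) ≠ 0 :=
    fun n => (ENNReal.ofReal_pos.2 (inv_pos.2 (hs n))).ne'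
  have htrans : ∀ (n : Fin N) (P : ℝ → Prop), (∀ᵐ y ∂μ, P y) →
      (∀ᵐ t ∂(volume.restrict (subInt x n)), P (Linv x n t)) := by
    intro n P hP
    rw [← (hme n).ae_map_iff, hmap n]
    exact Measure.ae_smul_measure hP _
  have hJmeas : ∀ n, MeasurableSet (subInt x n) := by
    intro n
    unfold subInt
    split
    · exact measurableSet_Icc
    · exact measurableSet_Ioc
  have hJsub : ∀ n, subInt x n ⊆ Set.Icc (x 0) (x (Fin.last N)) := by
    intro n
    have h1 : x 0 ≤ x n.castSucc := hx.monotone (Fin.zero_le _)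
    have h2 : x n.succ ≤ x (Fin.last N) := hx.monotone (Fin.le_last _)
    unfold subInt
    split
    · exact Set.Icc_subset_Icc h1 h2
    · exact Set.Ioc_subset_Icc_self.trans (Set.Icc_subset_Icc h1 h2)
  have hle : ∀ n, volume.restrict (subInt x n) ≤ μ := by
    intro n
    rw [hμ]
    exact Measure.restrict_mono (hJsub n) le_rfl
  have hres : ∀ (n : Fin N) (P : ℝ → Prop), (∀ᵐ y ∂μ, P y) →
      (∀ᵐ t ∂(volume.restrict (subInt x n)), P t) := fun n P hP =>
    hP.filter_mono (Measure.absolutelyContinuous_of_le (hle n)).ae_le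
  have Hn : ∀ n, ∀ᵐ t ∂(volume.restrict (subInt x n)), h t = c n * g (Linv x n t) := by
    intro n
    filter_upwards [hres n _ (hh n), htrans n _ (haa n), ae_restrict_mem (hJmeas n)]
      with t h1 h2 ht
    rw [h1 ht, h2]
  have hdisj : Pairwise (Function.onFun Disjoint (subInt x)) := by
    have key : ∀ m n : Fin N, m < n → Disjoint (subInt x m) (subInt x n) := by
      intro m n hmn
      rw [Set.disjoint_left]
      intro t htm htn
      have h1 : t ≤ x m.succ := by
        unfold subInt at htm
        split at htm
        · exact htm.2
        · exact htm.2
      have hn0 : ¬ n.val = 0 := by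
        have := Fin.lt_def.1 hmn
        omega
      have h2 : x n.castSucc < t := by
        unfold subInt at htn
        rw [if_neg hn0] at htn
        exact htn.1
      have h3 : x m.succ ≤ x n.castSucc := by
        apply hx.monotone
        rw [Fin.le_def]
        simp only [Fin.val_succ, Fin.coe_castSucc]
        exact Fin.lt_def.1 hmn
      linarith
    intro m n hmn
    rcases lt_or_gt_of_ne hmn with hlt' | hlt'
    · exact key m n hlt'
    · exact (key n m hlt').symm
  have hunion : (⋃ n, subInt x n) = Set.Icc (x 0) (x (Fin.last N)) := by
    apply Set.Subset.antisymm (Set.iUnion_subset hJsub)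
    intro t ht
    have hz : ((⟨0, hNpos⟩ : Fin N) : Fin N).castSucc = (0 : Fin (N + 1)) := rfl
    by_cases h01 : t ≤ x (⟨0, hNpos⟩ : Fin N).succ
    · refine Set.mem_iUnion.2 ⟨⟨0, hNpos⟩, ?_⟩
      simp only [subInt, if_pos rfl, Set.mem_Icc]
      exact ⟨hz ▸ ht.1, h01⟩
    · push_neg at h01
      have hone : ((⟨1, by omega⟩ : Fin N) : Fin N).castSucc = (⟨0, hNpos⟩ : Fin N).succ := by
        apply Fin.ext
        rfl
      set Sf : Finset (Fin N) := Finset.univ.filter (fun k => x k.castSucc < t) with hSf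
      have hmem1 : (⟨1, by omega⟩ : Fin N) ∈ Sf := by
        simp only [hSf, Finset.mem_filter, Finset.mem_univ, true_and]
        rw [hone]
        exact h01
      have hne : Sf.Nonempty := ⟨_, hmem1⟩
      set n := Sf.max' hne with hn_def
      have hnS : n ∈ Sf := Sf.max'_mem hne
      have hn1 : x n.castSucc < t := by
        simpa only [hSf, Finset.mem_filter, Finset.mem_univ, true_and] using hnS
      have hn0 : ¬ n.val = 0 := by
        have hle1 : (⟨1, by omega⟩ : Fin N) ≤ n := Sf.le_max' _ hmem1
        have h1' : (1 : ℕ) ≤ n.val := hle1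
        omega
      have hn2 : t ≤ x n.succ := by
        by_contra hcon
        push_neg at hcon
        by_cases hN' : n.val + 1 < N
        · have hmem2 : (⟨n.val + 1, hN'⟩ : Fin N) ∈ Sf := by
            simp only [hSf, Finset.mem_filter, Finset.mem_univ, true_and]
            have : ((⟨n.val + 1, hN'⟩ : Fin N) : Fin N).castSucc = n.succ := by
              apply Fin.ext; rfl
            rw [this]
            exact hcon
          have h2' : n.val + 1 ≤ n.val := Sf.le_max' _ hmem2
          omega
        · have hlast : n.succ = Fin.last N := by
            apply Fin.ext
            simp only [Fin.val_succ, Fin.val_last]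
            omega
          rw [hlast] at hcon
          linarith [ht.2]
      refine Set.mem_iUnion.2 ⟨n, ?_⟩
      simp only [subInt, if_neg hn0, Set.mem_Ioc]
      exact ⟨hn1, hn2⟩
  have hsum_s : ∑ n : Fin N, (s n)⁻¹ = 1 := by
    have hinv : ∀ n : Fin N, (s n)⁻¹ = (x n.succ - x n.castSucc) / (x (Fin.last N) - x 0) := by
      intro n
      rw [hs_def]
      exact inv_div _ _
    simp_rw [hinv]
    rw [← Finset.sum_div]
    have htel : ∑ n : Fin N, (x n.succ - x n.castSucc) = x (Fin.last N) - x 0 := by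
      set f : ℕ → ℝ := fun i => x ⟨min i N, by omega⟩ with hf_def
      have h1 : ∀ n : Fin N, x n.succ - x n.castSucc = f (n.val + 1) - f n.val := by
        intro n
        have e1 : f (n.val + 1) = x n.succ := by
          simp only [hf_def]
          congr 1
          apply Fin.ext
          simp only [Fin.val_succ]
          omega
        have e2 : f n.val = x n.castSucc := by
          simp only [hf_def]
          congr 1
          apply Fin.ext
          simp only [Fin.coe_castSucc]
          omega
        rw [e1, e2]
      rw [Finset.sum_congr rfl (fun n _ => h1 n)]
      rw [Fin.sum_univ_eq_sum_range (fun i => f (i + 1) - f i) N, Finset.sum_range_sub f N]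
      have e3 : f N = x (Fin.last N) := by
        simp only [hf_def]
        congr 1
        apply Fin.ext
        simp only [Fin.val_last]
        omega
      have e4 : f 0 = x 0 := by
        simp only [hf_def]
        congr 1
      rw [e3, e4]
    rw [htel, div_self (sub_ne_zero.2 hAB.ne')]
  have hwsum : ∑ n : Fin N, ENNReal.ofReal (s n)⁻¹ = 1 := by
    rw [← ENNReal.ofReal_sum_of_nonneg (fun n _ => inv_nonneg.2 (hs n).le), hsum_s,
      ENNReal.ofReal_one]
  rcases eq_or_ne p ∞ with hptop | hptop
  · -- p = ∞
    subst hptop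
    have hEh : eLpNorm h ⊤ μ = essSup (fun t : ℝ => (‖h t‖₊ : ℝ≥0∞)) μ := by
      rw [eLpNorm_exponent_top, eLpNormEssSup]
      rfl
    have hEg : eLpNorm g ⊤ μ = essSup (fun t : ℝ => (‖g t‖₊ : ℝ≥0∞)) μ := by
      rw [eLpNorm_exponent_top, eLpNormEssSup]
      rfl
    set E := essSup (fun t : ℝ => (‖g t‖₊ : ℝ≥0∞)) μ with hE
    have upper : (∀ n, |c n| ≤ Λ) →
        essSup (fun t : ℝ => (‖h t‖₊ : ℝ≥0∞)) μ ≤ ENNReal.ofReal Λ * E := by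
      intro hb
      have hae : ∀ᵐ t ∂(volume.restrict (⋃ n, subInt x n)),
          (‖h t‖₊ : ℝ≥0∞) ≤ ENNReal.ofReal Λ * E := by
        rw [ae_restrict_iUnion_iff]
        intro n
        filter_upwards [Hn n, htrans n _ (ae_le_essSup (fun t : ℝ => (‖g t‖₊ : ℝ≥0∞)))]
          with t h1 h2
        calc (‖h t‖₊ : ℝ≥0∞) = (‖c n‖₊ : ℝ≥0∞) * (‖g (Linv x n t)‖₊ : ℝ≥0∞) := by
              rw [h1, nnnorm_mul, ENNReal.coe_mul]
          _ ≤ ENNReal.ofReal Λ * E := by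
              apply mul_le_mul'
              · rw [← enorm_eq_nnnorm, Real.enorm_eq_ofReal_abs]
                exact ENNReal.ofReal_le_ofReal (hb n)
              · exact h2
      rw [hμ, ← hunion]
      exact essSup_le_of_ae_le _ hae
    constructor
    · intro hb
      rw [hEh, hEg]
      exact upper hb
    · intro hb
      rw [hEh, hEg]
      refine le_antisymm (upper fun n => (hb n).le) ?_
      set n0 : Fin N := ⟨0, hNpos⟩ with hn0_def
      have step1 : essSup (fun t : ℝ => (‖h t‖₊ : ℝ≥0∞)) (volume.restrict (subInt x n0))
          ≤ essSup (fun t : ℝ => (‖h t‖₊ : ℝ≥0∞)) μ := essSup_mono_measure' (hle n0)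
      have step2 : essSup (fun t : ℝ => (‖h t‖₊ : ℝ≥0∞)) (volume.restrict (subInt x n0))
          = ENNReal.ofReal Λ * E := by
        have hcongr : (fun t : ℝ => (‖h t‖₊ : ℝ≥0∞))
            =ᵐ[volume.restrict (subInt x n0)]
            (fun t : ℝ => ENNReal.ofReal Λ * (‖g (Linv x n0 t)‖₊ : ℝ≥0∞)) := by
          filter_upwards [Hn n0] with t h1
          rw [h1, nnnorm_mul, ENNReal.coe_mul, ← enorm_eq_nnnorm, Real.enorm_eq_ofReal_abs, hb n0]
        rw [essSup_congr_ae hcongr, ENNReal.essSup_const_mul]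
        congr 1
        have hcomp : (fun t : ℝ => (‖g (Linv x n0 t)‖₊ : ℝ≥0∞))
            = (fun y : ℝ => (‖g y‖₊ : ℝ≥0∞)) ∘ (Linv x n0) := rfl
        rw [hcomp, ← (hme n0).essSup_map_measure, hmap n0, essSup_ennreal_smul_measure (hwne n0)]
      rw [← step2]
      exact step1
  · -- finite p
    have hp0 : p ≠ 0 := (lt_of_lt_of_le zero_lt_one hp).ne'
    have hq : 0 < p.toReal := ENNReal.toReal_pos hp0 hptop
    set q := p.toReal with hq_def
    set E := ∫⁻ y : ℝ, (‖g y‖₊ : ℝ≥0∞) ^ q ∂μ with hE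
    have key : (∫⁻ t : ℝ, (‖h t‖₊ : ℝ≥0∞) ^ q ∂μ)
        = (∑ n : Fin N, (‖c n‖₊ : ℝ≥0∞) ^ q * ENNReal.ofReal (s n)⁻¹) * E := by
      conv_lhs => rw [hμ, ← hunion]
      rw [lintegral_iUnion hJmeas hdisj, tsum_fintype, Finset.sum_mul]
      refine Finset.sum_congr rfl fun n _ => ?_
      have step1 : ∫⁻ t in subInt x n, (‖h t‖₊ : ℝ≥0∞) ^ q ∂volume
          = ∫⁻ t in subInt x n,
              (‖c n‖₊ : ℝ≥0∞) ^ q * (‖g (Linv x n t)‖₊ : ℝ≥0∞) ^ q ∂volume := by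
        apply lintegral_congr_ae
        filter_upwards [Hn n] with t h1
        rw [h1, nnnorm_mul, ENNReal.coe_mul, ENNReal.mul_rpow_of_nonneg _ _ hq.le]
      have step2 : ∫⁻ t in subInt x n, (‖g (Linv x n t)‖₊ : ℝ≥0∞) ^ q ∂volume
          = ENNReal.ofReal (s n)⁻¹ * E := by
        have hlm := (hme n).lintegral_map (μ := volume.restrict (subInt x n))
          (f := fun y : ℝ => (‖g y‖₊ : ℝ≥0∞) ^ q)
        rw [hmap n, lintegral_smul_measure] at hlm
        exact hlm.symm
      rw [step1, lintegral_const_mul' _ _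
        (ENNReal.rpow_ne_top_of_nonneg hq.le ENNReal.coe_ne_top), step2]
      ring
    have hnorm_eq : ∀ f : ℝ → ℝ,
        eLpNorm f p μ = (∫⁻ t : ℝ, (‖f t‖₊ : ℝ≥0∞) ^ q ∂μ) ^ (1 / q) := fun f =>
      eLpNorm_eq_lintegral_rpow_enorm_toReal hp0 hptop
    have hpow : ∀ a : ℝ≥0∞, (a ^ q) ^ (1 / q) = a := by
      intro a
      rw [← ENNReal.rpow_mul, mul_one_div_cancel hq.ne', ENNReal.rpow_one]
    constructor
    · intro hb
      have hKle : (∑ n : Fin N, (‖c n‖₊ : ℝ≥0∞) ^ q * ENNReal.ofReal (s n)⁻¹)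
          ≤ (ENNReal.ofReal Λ) ^ q := by
        calc (∑ n : Fin N, (‖c n‖₊ : ℝ≥0∞) ^ q * ENNReal.ofReal (s n)⁻¹)
            ≤ ∑ n : Fin N, (ENNReal.ofReal Λ) ^ q * ENNReal.ofReal (s n)⁻¹ := by
              refine Finset.sum_le_sum fun n _ => ?_
              apply mul_le_mul_left
              apply ENNReal.rpow_le_rpow _ hq.le
              rw [← enorm_eq_nnnorm, Real.enorm_eq_ofReal_abs]
              exact ENNReal.ofReal_le_ofReal (hb n)
          _ = (ENNReal.ofReal Λ) ^ q := by rw [← Finset.mul_sum, hwsum, mul_one]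
      rw [hnorm_eq h, hnorm_eq g, key]
      calc ((∑ n : Fin N, (‖c n‖₊ : ℝ≥0∞) ^ q * ENNReal.ofReal (s n)⁻¹) * E) ^ (1 / q)
          ≤ ((ENNReal.ofReal Λ) ^ q * E) ^ (1 / q) :=
            ENNReal.rpow_le_rpow (mul_le_mul_left hKle E) (by positivity)
        _ = ENNReal.ofReal Λ * E ^ (1 / q) := by
            rw [ENNReal.mul_rpow_of_nonneg _ _ (by positivity), hpow]
    · intro hb
      have hcq : ∀ n : Fin N, ((‖c n‖₊ : ℝ≥0∞)) ^ q = (ENNReal.ofReal Λ) ^ q := fun n => by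
        rw [← enorm_eq_nnnorm, Real.enorm_eq_ofReal_abs, hb n]
      rw [hnorm_eq h, hnorm_eq g, key]
      simp_rw [hcq]
      rw [← Finset.mul_sum, hwsum, mul_one,
        ENNReal.mul_rpow_of_nonneg _ _ (by positivity : (0:ℝ) ≤ 1 / q), hpow]


/-- If the scale functions are constant then
`‖0 *_T b‖_p ≤ Λ ‖(0 *_T b) − b‖_p`; if moreover every `α n` equals `Λ` or `−Λ`
identically, then equality holds. -/
theorem partial_convolution_null_seed_constant_scales
    (N : ℕ) (hN : 2 ≤ N) (x : Fin (N + 1) → ℝ) (hx : StrictMono x)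
    (μ : Measure ℝ) (hμ : μ = volume.restrict (Set.Icc (x 0) (x (Fin.last N))))
    (p : ℝ≥0∞) [Fact (1 ≤ p)]
    (α : Fin N → Lp ℝ ∞ μ)
    (Λ : ℝ) (hΛdef : Λ = ⨆ n : Fin N, ‖α n‖) (hΛ : Λ < 1)
    (P₁ : Lp ℝ p μ → Lp ℝ p μ)
    (hP₁ : ∀ b : Lp ℝ p μ, SelfRef μ x (fun n => ⇑(α n)) ⇑(0 : Lp ℝ p μ) ⇑b ⇑(P₁ b))
    (hconst : ∃ c : Fin N → ℝ, ∀ n : Fin N, (α n : ℝ → ℝ) =ᵐ[μ] fun _ => c n) :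
    (∀ b : Lp ℝ p μ, ‖P₁ b‖ ≤ Λ * ‖P₁ b - b‖) ∧
    ((∀ n : Fin N, ((α n : ℝ → ℝ) =ᵐ[μ] fun _ => Λ) ∨ ((α n : ℝ → ℝ) =ᵐ[μ] fun _ => -Λ)) →
      ∀ b : Lp ℝ p μ, ‖P₁ b‖ = Λ * ‖P₁ b - b‖) := by
  obtain ⟨c, hc⟩ := hconst
  have hNpos : 0 < N := by omega
  have h0N : (0 : Fin (N + 1)) < Fin.last N := by
    rw [Fin.lt_def]
    simp only [Fin.val_zero, Fin.val_last]
    omega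
  have hAB : x 0 < x (Fin.last N) := hx h0N
  have hμ0 : μ ≠ 0 := by
    rw [hμ]
    intro hcon
    have h1 := congrArg (fun m : Measure ℝ => m (Set.Icc (x 0) (x (Fin.last N)))) hcon
    simp only [Measure.restrict_apply measurableSet_Icc, Set.inter_self, Real.volume_Icc,
      Measure.coe_zero, Pi.zero_apply, ENNReal.ofReal_eq_zero] at h1
    linarith
  have hΛ0 : 0 ≤ Λ := hΛdef ▸ Real.iSup_nonneg fun n => norm_nonneg _
  have hnormα : ∀ n, ‖α n‖ = |c n| := by
    intro n
    rw [Lp.norm_def, eLpNorm_congr_ae (hc n), eLpNorm_const _ (by simp) hμ0]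
    simp [Real.norm_eq_abs]
  have hcΛ : ∀ n, |c n| ≤ Λ := by
    intro n
    rw [hΛdef, ← hnormα n]
    exact le_ciSup (f := fun n : Fin N => ‖α n‖) (Set.Finite.bddAbove (Set.finite_range _)) n
  have hcore : ∀ b : Lp ℝ p μ,
      ((∀ n, |c n| ≤ Λ) → eLpNorm (⇑(P₁ b)) p μ
          ≤ ENNReal.ofReal Λ * eLpNorm (fun t => (P₁ b : ℝ → ℝ) t - (b : ℝ → ℝ) t) p μ) ∧
        ((∀ n, |c n| = Λ) → eLpNorm (⇑(P₁ b)) p μ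
          = ENNReal.ofReal Λ * eLpNorm (fun t => (P₁ b : ℝ → ℝ) t - (b : ℝ → ℝ) t) p μ) := by
    intro b
    refine core N hN x hx μ hμ p Fact.out c Λ (fun n => ⇑(α n)) (⇑(P₁ b))
      (fun t => (P₁ b : ℝ → ℝ) t - (b : ℝ → ℝ) t) ?_ hc
    intro n
    filter_upwards [hP₁ b n, Lp.coeFn_zero ℝ p μ] with t h1 h2 ht
    rw [h1 ht, h2, Pi.zero_apply, zero_add]
  have hfin : ∀ b : Lp ℝ p μ,
      eLpNorm (fun t => (P₁ b : ℝ → ℝ) t - (b : ℝ → ℝ) t) p μ = eLpNorm (⇑(P₁ b - b)) p μ :=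
    fun b => (eLpNorm_congr_ae (Lp.coeFn_sub (P₁ b) b)).symm
  constructor
  · intro b
    have hb := (hcore b).1 hcΛ
    rw [hfin b] at hb
    rw [Lp.norm_def, Lp.norm_def]
    have hfin2 : ENNReal.ofReal Λ * eLpNorm (⇑(P₁ b - b)) p μ ≠ ⊤ :=
      ENNReal.mul_ne_top ENNReal.ofReal_ne_top (Lp.eLpNorm_ne_top _)
    calc (eLpNorm (⇑(P₁ b)) p μ).toReal
        ≤ (ENNReal.ofReal Λ * eLpNorm (⇑(P₁ b - b)) p μ).toReal := ENNReal.toReal_mono hfin2 hb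
      _ = Λ * (eLpNorm (⇑(P₁ b - b)) p μ).toReal := by
          rw [ENNReal.toReal_mul, ENNReal.toReal_ofReal hΛ0]
  · intro hpm b
    have hne : (ae μ).NeBot := ae_neBot.2 hμ0
    have hceq : ∀ n, |c n| = Λ := by
      intro n
      rcases hpm n with hh | hh
      · obtain ⟨y, hy⟩ := ((hc n).symm.trans hh).exists
        have hy' : c n = Λ := hy
        rw [hy', abs_of_nonneg hΛ0]
      · obtain ⟨y, hy⟩ := ((hc n).symm.trans hh).exists
        have hy' : c n = -Λ := hy
        rw [hy', abs_neg, abs_of_nonneg hΛ0]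
    have hb := (hcore b).2 hceq
    rw [hfin b] at hb
    rw [Lp.norm_def, Lp.norm_def, hb, ENNReal.toReal_mul, ENNReal.toReal_ofReal hΛ0]


end
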